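/- Let μ be a complex number with Re(μ) ≥ 0 and Im(μ) ≥ 0 satisfying |μ − √(2/3)| < √(8/3) (or μ = i√2), with μ < √(2/3) if Im(μ) = 0, and additionally Im(μ) ≥ √((√6 − Re(μ)) · Re(μ)). Then the two-qubit reduced density matrix of the 4-qubit state ψ_μ, obtained by tracing out any two of the four qubits, has a positive semidefinite partial transpose; equivalently, its negativity vanishes. -/

import Mathlib

open scoped BigOperators ComplexConjugate ComplexOrder

noncomputable section

/-- A single-qubit unit vector in `ℂ²`. -/
def IsUnitQubit (e : Fin 2 → ℂ) : Prop := ∑ j, Complex.normSq (e j) = 1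

/-- Norm-one condition for a multiqubit vector on the register `ι`. -/
def IsUnitState {ι : Type*} [Fintype ι] [DecidableEq ι] (ψ : (ι → Fin 2) → ℂ) : Prop :=
  ∑ x, Complex.normSq (ψ x) = 1

/-- The product state `⊗ᵢ eᵢ`. -/
def prodState {ι : Type*} [Fintype ι] (e : ι → Fin 2 → ℂ) : (ι → Fin 2) → ℂ :=
  fun x => ∏ i, e i (x i)

/-- A pure state is a product state if it is a tensor product of single-qubit unit vectors. -/
def IsProductState {ι : Type*} [Fintype ι] (ψ : (ι → Fin 2) → ℂ) : Prop :=
  ∃ e : ι → Fin 2 → ℂ, (∀ i, IsUnitQubit (e i)) ∧ ψ = prodState e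

/-- A pure state is entangled if it is not a product state. -/
def IsEntangledState {ι : Type*} [Fintype ι] (ψ : (ι → Fin 2) → ℂ) : Prop :=
  ¬ IsProductState ψ

/-- The projector `|v⟩⟨v|` as a matrix. -/
def proj {α : Type*} (v : α → ℂ) : Matrix α α ℂ :=
  Matrix.of fun x y => v x * conj (v y)

/-- A density matrix on the qubit register `ι` is separable if it is a finite convex
combination of projectors onto product states (and entangled otherwise). -/
def IsSeparableDensity {ι : Type*} [Fintype ι] (ρ : Matrix (ι → Fin 2) (ι → Fin 2) ℂ) : Prop :=
  ∃ (n : ℕ) (w : Fin n → ℝ) (e : Fin n → ι → Fin 2 → ℂ),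
    (∀ m, 0 ≤ w m) ∧ (∑ m, w m = 1) ∧ (∀ m i, IsUnitQubit (e m i)) ∧
    ρ = ∑ m, (w m : ℂ) • proj (prodState (e m))

/-- Assemble a full assignment of the `N` qubits from an assignment `x` of the qubits outside
`S` and an assignment `z` of the qubits in `S`. -/
def mergeCompl {N : ℕ} (S : Finset (Fin N)) (x : {i : Fin N // i ∉ S} → Fin 2)
    (z : {i : Fin N // i ∈ S} → Fin 2) : Fin N → Fin 2 :=
  fun i => if h : i ∈ S then z ⟨i, h⟩ else x ⟨i, h⟩

/-- The reduced density operator `ρ_{¬S}(ψ)`: the partial trace of `|ψ⟩⟨ψ|` over the qubits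
in `S`. -/
def reducedState {N : ℕ} (ψ : (Fin N → Fin 2) → ℂ) (S : Finset (Fin N)) :
    Matrix ({i : Fin N // i ∉ S} → Fin 2) ({i : Fin N // i ∉ S} → Fin 2) ℂ :=
  Matrix.of fun x y => ∑ z : {i : Fin N // i ∈ S} → Fin 2,
    ψ (mergeCompl S x z) * conj (ψ (mergeCompl S y z))

/-- The `k`-excitation Dicke state `|D_4^{(k)}⟩` of 4 qubits. -/
def dicke4 (k : ℕ) : (Fin 4 → Fin 2) → ℂ :=
  fun x => if (∑ i, ((x i : ℕ))) = k then ((1 / Real.sqrt ((4 : ℕ).choose k) : ℝ) : ℂ) else 0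

/-- The 4-qubit state `ψ_μ = (|D_4^{(0)}⟩ + μ |D_4^{(2)}⟩ + |D_4^{(4)}⟩)/√(2 + |μ|²)`. -/
def psiMu (μ : ℂ) : (Fin 4 → Fin 2) → ℂ :=
  fun x => (dicke4 0 x + μ * dicke4 2 x + dicke4 4 x)
    / ((Real.sqrt (2 + Complex.normSq μ) : ℝ) : ℂ)

/-- Reassemble a full assignment of the 4 qubits from an assignment `v` of the two kept qubits
`q₁`, `q₂` and an assignment `z` of the other two. -/
def extendPair (q₁ q₂ : Fin 4) (v : Fin 2 → Fin 2)
    (z : {i : Fin 4 // i ≠ q₁ ∧ i ≠ q₂} → Fin 2) : Fin 4 → Fin 2 :=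
  fun i => if h₁ : i = q₁ then v 0 else if h₂ : i = q₂ then v 1 else z ⟨i, ⟨h₁, h₂⟩⟩

/-- The two-qubit reduced density matrix of a 4-qubit state `ψ` obtained by tracing out all
qubits but `q₁` (kept as first qubit) and `q₂` (kept as second qubit). -/
def rhoPair (ψ : (Fin 4 → Fin 2) → ℂ) (q₁ q₂ : Fin 4) :
    Matrix (Fin 2 → Fin 2) (Fin 2 → Fin 2) ℂ :=
  Matrix.of fun v w => ∑ z : {i : Fin 4 // i ≠ q₁ ∧ i ≠ q₂} → Fin 2,
    ψ (extendPair q₁ q₂ v z) * conj (ψ (extendPair q₁ q₂ w z))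

/-- The partial transpose of a two-qubit density matrix with respect to the first qubit:
`ρ^{T₁}_{(i,j),(k,l)} = ρ_{(k,j),(i,l)}`. -/
def ptransposeFirst (ρ : Matrix (Fin 2 → Fin 2) (Fin 2 → Fin 2) ℂ) :
    Matrix (Fin 2 → Fin 2) (Fin 2 → Fin 2) ℂ :=
  Matrix.of fun v w => ρ ![w 0, v 1] ![v 0, w 1]

namespace PsiMuPPT

def amp (μ : ℂ) (k : ℕ) : ℂ :=
  ((if k = 0 then 1 else 0) + μ * (if k = 2 then (((1 / Real.sqrt 6 : ℝ)) : ℂ) else 0)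
    + (if k = 4 then 1 else 0)) / ((Real.sqrt (2 + Complex.normSq μ) : ℝ) : ℂ)

lemma psiMu_eq_amp (μ : ℂ) (x : Fin 4 → Fin 2) :
    psiMu μ x = amp μ (∑ i, ((x i : ℕ))) := by
  have h0 : ((4:ℕ).choose 0 : ℝ) = 1 := by norm_num
  have h2 : ((4:ℕ).choose 2 : ℝ) = 6 := by norm_num [Nat.choose]
  have h4 : ((4:ℕ).choose 4 : ℝ) = 1 := by norm_num [Nat.choose]
  simp [psiMu, dicke4, amp, h0, h2, h4, Real.sqrt_one]

lemma weight_extendPair (q₁ q₂ : Fin 4) (h : q₁ ≠ q₂) (v : Fin 2 → Fin 2)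
    (z : {i : Fin 4 // i ≠ q₁ ∧ i ≠ q₂} → Fin 2) :
    (∑ i, ((extendPair q₁ q₂ v z i : ℕ))) =
      ((v 0 : ℕ) + (v 1 : ℕ)) + ∑ j : {i : Fin 4 // i ≠ q₁ ∧ i ≠ q₂}, (z j : ℕ) := by
  classical
  have hu : (Finset.univ : Finset (Fin 4))
      = ({q₁, q₂} : Finset (Fin 4)) ∪ ({q₁, q₂} : Finset (Fin 4))ᶜ :=
    (Finset.union_compl _).symm
  rw [hu, Finset.sum_union disjoint_compl_right]
  congr 1
  · rw [Finset.sum_pair h]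
    have e1 : extendPair q₁ q₂ v z q₁ = v 0 := by simp [extendPair]
    have e2 : extendPair q₁ q₂ v z q₂ = v 1 := by simp [extendPair, (Ne.symm h : q₂ ≠ q₁)]
    rw [e1, e2]
  · rw [Finset.sum_subtype (p := fun i => i ≠ q₁ ∧ i ≠ q₂) _
      (fun i => by simp [not_or]) (fun i => ((extendPair q₁ q₂ v z i : ℕ)))]
    refine Finset.sum_congr rfl fun j _ => ?_
    have : extendPair q₁ q₂ v z j.1 = z j := by simp [extendPair, j.2.1, j.2.2]
    rw [this]

lemma card_aux (q₁ q₂ : Fin 4) (h : q₁ ≠ q₂) :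
    Fintype.card {i : Fin 4 // i ≠ q₁ ∧ i ≠ q₂} = 2 := by
  fin_cases q₁ <;> fin_cases q₂ <;> first | exact absurd rfl h | decide

lemma rhoPair_apply (μ : ℂ) (q₁ q₂ : Fin 4) (h : q₁ ≠ q₂) (v w : Fin 2 → Fin 2) :
    rhoPair (psiMu μ) q₁ q₂ v w =
      ∑ s : Fin 2, ∑ t : Fin 2,
        amp μ (((v 0 : ℕ) + (v 1 : ℕ)) + ((s : ℕ) + (t : ℕ))) *
          conj (amp μ (((w 0 : ℕ) + (w 1 : ℕ)) + ((s : ℕ) + (t : ℕ)))) := by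
  classical
  obtain ⟨e⟩ : Nonempty (Fin 2 ≃ {i : Fin 4 // i ≠ q₁ ∧ i ≠ q₂}) :=
    ⟨(Fintype.equivFinOfCardEq (card_aux q₁ q₂ h)).symm⟩
  set S := {i : Fin 4 // i ≠ q₁ ∧ i ≠ q₂}
  set E : (Fin 2 → Fin 2) ≃ (S → Fin 2) := e.arrowCongr (Equiv.refl (Fin 2)) with hE
  have hsum : ∀ g : Fin 2 → Fin 2, (∑ j : S, ((E g) j : ℕ)) = (g 0 : ℕ) + (g 1 : ℕ) := by
    intro g
    have h1 : (∑ j : S, ((E g) j : ℕ)) = ∑ j : S, ((g (e.symm j) : ℕ)) := rfl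
    rw [h1, Equiv.sum_comp e.symm (fun i => ((g i : ℕ))), Fin.sum_univ_two]
  calc rhoPair (psiMu μ) q₁ q₂ v w
      = ∑ z : S → Fin 2,
          amp μ (((v 0 : ℕ) + (v 1 : ℕ)) + ∑ j, (z j : ℕ)) *
            conj (amp μ (((w 0 : ℕ) + (w 1 : ℕ)) + ∑ j, (z j : ℕ))) := by
        refine Finset.sum_congr rfl fun z _ => ?_
        rw [psiMu_eq_amp, psiMu_eq_amp, weight_extendPair q₁ q₂ h,
          weight_extendPair q₁ q₂ h]
    _ = ∑ g : Fin 2 → Fin 2,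
          amp μ (((v 0 : ℕ) + (v 1 : ℕ)) + ((g 0 : ℕ) + (g 1 : ℕ))) *
            conj (amp μ (((w 0 : ℕ) + (w 1 : ℕ)) + ((g 0 : ℕ) + (g 1 : ℕ)))) := by
        refine (Fintype.sum_equiv E _ _ fun g => ?_).symm
        rw [hsum g]
    _ = ∑ p : Fin 2 × Fin 2,
          amp μ (((v 0 : ℕ) + (v 1 : ℕ)) + ((p.1 : ℕ) + (p.2 : ℕ))) *
            conj (amp μ (((w 0 : ℕ) + (w 1 : ℕ)) + ((p.1 : ℕ) + (p.2 : ℕ)))) :=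
        Fintype.sum_equiv (piFinTwoEquiv fun _ => Fin 2) _ _ fun g => rfl
    _ = ∑ s : Fin 2, ∑ t : Fin 2,
          amp μ (((v 0 : ℕ) + (v 1 : ℕ)) + ((s : ℕ) + (t : ℕ))) *
            conj (amp μ (((w 0 : ℕ) + (w 1 : ℕ)) + ((s : ℕ) + (t : ℕ)))) := by
        rw [Fintype.sum_prod_type]

def Aμ (μ : ℂ) : ℝ := (Real.sqrt (2 + Complex.normSq μ))⁻¹
def Bμ (μ : ℂ) : ℂ := μ * (((Real.sqrt 6)⁻¹ * Aμ μ : ℝ) : ℂ)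

lemma amp_zero (μ : ℂ) : amp μ 0 = ((Aμ μ : ℝ) : ℂ) := by
  simp [amp, Aμ, div_eq_mul_inv]

lemma amp_one (μ : ℂ) : amp μ 1 = 0 := by simp [amp]
lemma amp_three (μ : ℂ) : amp μ 3 = 0 := by simp [amp]
lemma amp_four (μ : ℂ) : amp μ 4 = ((Aμ μ : ℝ) : ℂ) := by
  simp [amp, Aμ, div_eq_mul_inv]

lemma amp_two (μ : ℂ) : amp μ 2 = Bμ μ := by
  simp only [amp, Bμ, Aμ]
  push_cast
  field_simp
  ring

def u1 : (Fin 2 → Fin 2) → ℂ := fun v => if v 0 = v 1 then 1 else 0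
def u2 : (Fin 2 → Fin 2) → ℂ := fun v => if v 0 = v 1 then (if v 0 = 0 then 1 else -1) else 0
def u3 : (Fin 2 → Fin 2) → ℂ := fun v => if v 0 = v 1 then 0 else 1
def u4 : (Fin 2 → Fin 2) → ℂ := fun v => if v 0 = v 1 then 0 else (if v 0 = 0 then 1 else -1)

def cα (μ : ℂ) : ℝ := (Aμ μ ^ 2 + 3 * Complex.normSq (Bμ μ)) / 2
def cβ (μ : ℂ) : ℝ := (Aμ μ ^ 2 - Complex.normSq (Bμ μ)) / 2
def cγ (μ : ℂ) : ℝ := Complex.normSq (Bμ μ) + Aμ μ * (Bμ μ).re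
def cδ (μ : ℂ) : ℝ := Complex.normSq (Bμ μ) - Aμ μ * (Bμ μ).re

lemma decomp (μ : ℂ) (q₁ q₂ : Fin 4) (h : q₁ ≠ q₂) :
    ptransposeFirst (rhoPair (psiMu μ) q₁ q₂) =
      (cα μ : ℂ) • proj u1 + (cβ μ : ℂ) • proj u2
        + (cγ μ : ℂ) • proj u3 + (cδ μ : ℂ) • proj u4 := by
  have hBB : ((Complex.normSq (Bμ μ) : ℝ) : ℂ) = Bμ μ * conj (Bμ μ) :=
    (Complex.mul_conj _).symm
  have hre : (((Bμ μ).re : ℝ) : ℂ) = (Bμ μ + conj (Bμ μ)) / 2 := by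
    rw [Complex.add_conj]; push_cast; ring
  have h2 : ∀ i : Fin 2, i = 0 ∨ i = 1 := by decide
  ext v w
  have hpt : ptransposeFirst (rhoPair (psiMu μ) q₁ q₂) v w
      = rhoPair (psiMu μ) q₁ q₂ ![w 0, v 1] ![v 0, w 1] := rfl
  rw [hpt, rhoPair_apply μ q₁ q₂ h]
  rcases h2 (v 0) with h00 | h00 <;> rcases h2 (v 1) with h01 | h01 <;>
    rcases h2 (w 0) with h10 | h10 <;> rcases h2 (w 1) with h11 | h11 <;>
  · simp only [Matrix.cons_val_zero, Matrix.cons_val_one, Matrix.head_cons,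
      Matrix.add_apply, Matrix.smul_apply, proj, Matrix.of_apply, smul_eq_mul,
      u1, u2, u3, u4, h00, h01, h10, h11, Fin.sum_univ_two, Fin.isValue]
    norm_num [amp_zero, amp_one, amp_two, amp_three, amp_four, cα, cβ, cγ, cδ]
    try push_cast [hBB, hre]
    try ring_nf
    try simp [Complex.conj_ofReal]
    try push_cast [hBB, hre]
    try ring


lemma smul_proj_psd {α : Type*} [Fintype α] [DecidableEq α] (u : α → ℂ) (r : ℝ) (hr : 0 ≤ r) :
    ((r : ℂ) • proj u).PosSemidef := by
  rw [Matrix.posSemidef_iff_dotProduct_mulVec]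
  constructor
  · ext x y
    simp only [Matrix.conjTranspose_apply, Matrix.smul_apply, proj, Matrix.of_apply,
      smul_eq_mul, star_mul', map_mul, Complex.star_def, Complex.conj_conj,
      Complex.conj_ofReal]
    ring
  · intro x
    have key : dotProduct (star x) (((r : ℂ) • proj u).mulVec x)
        = (r : ℂ) * ((∑ i, conj (x i) * u i) * (∑ j, conj (u j) * x j)) := by
      simp only [dotProduct, Matrix.mulVec, Matrix.smul_apply, proj, Matrix.of_apply,
        smul_eq_mul, Pi.star_apply, Complex.star_def, Finset.mul_sum, Finset.sum_mul]
      rw [Finset.sum_comm]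
      refine Finset.sum_congr rfl fun i _ => Finset.sum_congr rfl fun j _ => ?_
      ring
    have hstar : (∑ j, conj (u j) * x j) = star (∑ i, conj (x i) * u i) := by
      rw [star_sum]
      refine Finset.sum_congr rfl fun j _ => ?_
      simp only [star_mul', Complex.star_def, Complex.conj_conj]
      ring
    rw [key, hstar]
    exact mul_nonneg (by exact_mod_cast hr) (mul_star_self_nonneg _)

end PsiMuPPT

open PsiMuPPT

/-- For `μ` in the fundamental domain `S` of the `D_{1,1,1,1}` family
(`Re μ ≥ 0`, `Im μ ≥ 0`, `|μ − √(2/3)| < √(8/3)` or `μ = i√2`, and `μ < √(2/3)` when `μ` is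
real) satisfying moreover `Im μ ≥ √((√6 − Re μ)·Re μ)`, the two-qubit reduced density matrix
of `ψ_μ`, obtained by tracing out any two of the four qubits, has positive semidefinite
partial transpose, i.e. its negativity vanishes. -/
theorem psiMu_two_qubit_ppt (μ : ℂ)
    (hre : 0 ≤ μ.re) (him : 0 ≤ μ.im)
    (hdom : ‖μ - (Real.sqrt (2 / 3) : ℝ)‖ < Real.sqrt (8 / 3)
      ∨ μ = Complex.I * (Real.sqrt 2 : ℝ))
    (hreal : μ.im = 0 → μ.re < Real.sqrt (2 / 3))
    (hfragile : Real.sqrt ((Real.sqrt 6 - μ.re) * μ.re) ≤ μ.im) :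
    ∀ q₁ q₂ : Fin 4, q₁ ≠ q₂ →
      (ptransposeFirst (rhoPair (psiMu μ) q₁ q₂)).PosSemidef := by
  have hs6sq : Real.sqrt 6 ^ 2 = 6 := Real.sq_sqrt (by norm_num)
  have hs6pos : (0:ℝ) < Real.sqrt 6 := Real.sqrt_pos.mpr (by norm_num)
  have hn : (0:ℝ) < 2 + Complex.normSq μ := by
    have := Complex.normSq_nonneg μ; linarith
  have hA : 0 < Aμ μ := by
    rw [Aμ]; exact inv_pos.mpr (Real.sqrt_pos.mpr hn)
  have h16 : (Real.sqrt 6)⁻¹ * (Real.sqrt 6)⁻¹ = 1 / 6 := by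
    rw [← mul_inv, Real.mul_self_sqrt (by norm_num : (0:ℝ) ≤ 6)]
    norm_num
  have hBsq : Complex.normSq (Bμ μ) = Complex.normSq μ * Aμ μ ^ 2 / 6 := by
    rw [Bμ, Complex.normSq_mul, Complex.normSq_ofReal,
      show ((Real.sqrt 6)⁻¹ * Aμ μ * ((Real.sqrt 6)⁻¹ * Aμ μ))
        = ((Real.sqrt 6)⁻¹ * (Real.sqrt 6)⁻¹) * (Aμ μ * Aμ μ) by ring, h16]
    ring
  have hBre : (Bμ μ).re = μ.re * ((Real.sqrt 6)⁻¹ * Aμ μ) := by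
    rw [Bμ, Complex.mul_re, Complex.ofReal_re, Complex.ofReal_im]
    ring
  have h6 : Complex.normSq μ ≤ 6 := by
    rcases hdom with h | h
    · have key : Real.sqrt (8/3) + Real.sqrt (2/3) = Real.sqrt 6 := by
        have h1 : Real.sqrt (8/3) = 2 * Real.sqrt (2/3) := by
          rw [show (8:ℝ)/3 = 2^2 * (2/3) by norm_num, Real.sqrt_mul (by positivity),
            Real.sqrt_sq (by norm_num)]
        have h2 : Real.sqrt 6 = 3 * Real.sqrt (2/3) := by
          rw [show (6:ℝ) = 3^2 * (2/3) by norm_num, Real.sqrt_mul (by positivity),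
            Real.sqrt_sq (by norm_num)]
        rw [h1, h2]; ring
      have tri : ‖μ‖ ≤ ‖μ - ((Real.sqrt (2/3) : ℝ) : ℂ)‖
          + ‖((Real.sqrt (2/3) : ℝ) : ℂ)‖ := by
        calc ‖μ‖
            = ‖(μ - ((Real.sqrt (2/3) : ℝ) : ℂ)) + ((Real.sqrt (2/3) : ℝ) : ℂ)‖ := by
              ring_nf
          _ ≤ _ := norm_add_le _ _
      have habs2 : ‖((Real.sqrt (2/3) : ℝ) : ℂ)‖ = Real.sqrt (2/3) := by
        rw [Complex.norm_of_nonneg (Real.sqrt_nonneg _)]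
      have hlt : ‖μ‖ < Real.sqrt 6 := by
        rw [← key]; rw [habs2] at tri; linarith
      have := Complex.sq_norm μ
      nlinarith [norm_nonneg μ]
    · rw [h]
      simp [Complex.normSq_mul, Complex.normSq_ofReal]
      nlinarith [Real.mul_self_sqrt (show (0:ℝ) ≤ 2 by norm_num)]
  have hfr : Real.sqrt 6 * μ.re ≤ Complex.normSq μ := by
    have him2 : (Real.sqrt 6 - μ.re) * μ.re ≤ μ.im ^ 2 := by
      by_cases hc : 0 ≤ (Real.sqrt 6 - μ.re) * μ.re
      · nlinarith [Real.sq_sqrt hc, Real.sqrt_nonneg ((Real.sqrt 6 - μ.re) * μ.re)]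
      · nlinarith [sq_nonneg μ.im]
    rw [Complex.normSq_apply]
    nlinarith
  have hα : 0 ≤ cα μ := by
    have := Complex.normSq_nonneg (Bμ μ)
    rw [cα]; nlinarith [sq_nonneg (Aμ μ)]
  have hβ : 0 ≤ cβ μ := by
    rw [cβ, hBsq]
    nlinarith [mul_nonneg (sq_nonneg (Aμ μ)) (sub_nonneg.mpr h6)]
  have hγ : 0 ≤ cγ μ := by
    rw [cγ, hBre]
    have : 0 ≤ μ.re * ((Real.sqrt 6)⁻¹ * Aμ μ) :=
      mul_nonneg hre (mul_nonneg (inv_nonneg.mpr hs6pos.le) hA.le)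
    nlinarith [Complex.normSq_nonneg (Bμ μ), hA.le]
  have hδ : 0 ≤ cδ μ := by
    have hid : cδ μ = Aμ μ ^ 2 * ((Real.sqrt 6)⁻¹) ^ 2 * (Complex.normSq μ - Real.sqrt 6 * μ.re) := by
      rw [cδ, hBsq, hBre, inv_pow, hs6sq]
      field_simp
      linear_combination μ.re * hs6sq
    rw [hid]
    exact mul_nonneg (mul_nonneg (sq_nonneg _) (sq_nonneg _)) (sub_nonneg.mpr hfr)
  intro q₁ q₂ hne
  rw [decomp μ q₁ q₂ hne]
  exact (((smul_proj_psd u1 _ hα).add (smul_proj_psd u2 _ hβ)).add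
    (smul_proj_psd u3 _ hγ)).add (smul_proj_psd u4 _ hδ)
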